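/- Let G be strongly connected with diameter d, let η = (2.5 log m)/ε with m = |E|, let δ ≤ ε/(16 w_max d) and assume ε ≤ 2 w_max. Suppose x ∈ ℝⁿ is such that A := diag(e^x) exp[-ηW] diag(e^{-x}) satisfies ‖A𝟏 - Aᵀ𝟏‖₁/∑_{ij}A_{ij} ≤ δ and ∑_{ij} A_{ij} ≤ ∑_{ij} e^{-ηW_{ij}}. Then P = A/∑_{ij}A_{ij} satisfies ⟨P,W⟩ ≤ μ(G) + ε/2. -/

import Mathlib

open Finset

/-- A directed cycle: a nonempty list of distinct vertices whose consecutive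
pairs (cyclically) are edges of `E`. -/
def IsCycle {n : ℕ} (E : Finset (Fin n × Fin n)) (c : List (Fin n)) : Prop :=
  c ≠ [] ∧ c.Nodup ∧ ∀ p ∈ c.zip (c.rotate 1), p ∈ E

/-- Mean weight of a cycle. -/
noncomputable def meanWeight {n : ℕ} (w : Fin n × Fin n → ℝ) (c : List (Fin n)) : ℝ :=
  ((c.zip (c.rotate 1)).map w).sum / c.length

/-- Min-mean-cycle value of the digraph `(V, E, w)`. -/
noncomputable def mmc {n : ℕ} (E : Finset (Fin n × Fin n)) (w : Fin n × Fin n → ℝ) : ℝ :=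
  sInf {x : ℝ | ∃ c, IsCycle E c ∧ meanWeight w c = x}

/-- Membership in `Δ_E`: a nonnegative matrix supported on `E` with total sum 1. -/
def InDeltaE {n : ℕ} (E : Finset (Fin n × Fin n)) (P : Matrix (Fin n) (Fin n) ℝ) : Prop :=
  (∀ i j, 0 ≤ P i j) ∧ (∀ i j, (i, j) ∉ E → P i j = 0) ∧ (∑ i, ∑ j, P i j) = 1

/-- A circulation: netflow is balanced at every vertex. -/
def IsBalanced {n : ℕ} (P : Matrix (Fin n) (Fin n) ℝ) : Prop :=
  ∀ i, (∑ j, P i j) = ∑ j, P j i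

/-- Total netflow imbalance `‖P𝟏 - Pᵀ𝟏‖₁`. -/
noncomputable def imb {n : ℕ} (P : Matrix (Fin n) (Fin n) ℝ) : ℝ :=
  ∑ i, |(∑ j, P i j) - ∑ j, P j i|

/-- Entrywise ℓ₁ norm of a matrix. -/
noncomputable def l1 {n : ℕ} (P : Matrix (Fin n) (Fin n) ℝ) : ℝ :=
  ∑ i, ∑ j, |P i j|

/-- There is a directed path from `i` to `j` of length at most `d`. -/
def ConnectsWithin {n : ℕ} (E : Finset (Fin n × Fin n)) (d : ℕ) (i j : Fin n) : Prop :=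
  ∃ l : List (Fin n), l.length ≤ d ∧ List.Chain (fun a b => (a, b) ∈ E) i l ∧
    (i :: l).getLast (List.cons_ne_nil _ _) = j

/-- A directed walk from `s` to `v` along edges of `E`, recorded by its
list of vertices after `s`. -/
def IsWalkFrom {n : ℕ} (E : Finset (Fin n × Fin n)) (s v : Fin n) (l : List (Fin n)) : Prop :=
  List.Chain (fun a b => (a, b) ∈ E) s l ∧ (s :: l).getLast (List.cons_ne_nil _ _) = v

/-- Weight of a walk. -/
noncomputable def walkWeight {n : ℕ} (w : Fin n × Fin n → ℝ) (s : Fin n) (l : List (Fin n)) : ℝ :=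
  (((s :: l).zip l).map w).sum

lemma aux_map_sub_sum {α : Type*} (l : List α) (f g : α → ℝ) :
    (l.map (fun p => f p - g p)).sum = (l.map f).sum - (l.map g).sum := by
  induction l with
  | nil => simp
  | cons a l ih => simp [ih]; ring

lemma aux_zip_map_sub_sum {n : ℕ} (x : Fin n → ℝ) :
    ∀ (l l' : List (Fin n)), l.length = l'.length →
    ((l.zip l').map (fun p => x p.1 - x p.2)).sum = (l.map x).sum - (l'.map x).sum := by
  intro l
  induction l with
  | nil =>
    intro l' h
    have : l' = [] := List.length_eq_zero_iff.mp h.symm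
    simp [this]
  | cons a l ih =>
    intro l' h
    cases l' with
    | nil => simp at h
    | cons b l'' =>
      simp only [List.zip_cons_cons, List.map_cons, List.sum_cons]
      rw [ih l'' (by simpa using h)]
      ring

lemma aux_chain_telescope {n : ℕ} (E : Finset (Fin n × Fin n)) (x : Fin n → ℝ) (L : ℝ)
    (hL : 0 ≤ L) (hedge : ∀ p ∈ E, x p.1 - x p.2 ≤ L) :
    ∀ (l : List (Fin n)) (i : Fin n), List.Chain (fun a b => (a, b) ∈ E) i l →
      x i - x ((i :: l).getLast (List.cons_ne_nil _ _)) ≤ l.length * L := by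
  intro l
  induction l with
  | nil => intro i _; simp
  | cons b l ih =>
    intro i hc
    replace hc := List.isChain_cons_cons.mp hc
    have h1 := hedge (i, b) hc.1
    have h2 := ih b hc.2
    have hlast : ((i :: b :: l).getLast (List.cons_ne_nil _ _))
        = ((b :: l).getLast (List.cons_ne_nil _ _)) := by
      simp [List.getLast_cons]
    rw [hlast]
    have : ((b :: l).length : ℝ) * L = L + l.length * L := by
      simp [List.length_cons]; push_cast; ring
    rw [this]
    dsimp at h1
    linarith

lemma aux_entropy_bound {ι : Type*} [DecidableEq ι] (S : Finset ι) (f : ι → ℝ) (hS : S.Nonempty)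
    (hf : ∀ p ∈ S, 0 < f p) :
    (∑ p ∈ S, f p) * Real.log (∑ p ∈ S, f p) - (∑ p ∈ S, f p) * Real.log S.card
      ≤ ∑ p ∈ S, f p * Real.log (f p) := by
  set s := ∑ p ∈ S, f p with hs
  have hspos : 0 < s := Finset.sum_pos hf hS
  have hm : (0:ℝ) < S.card := by exact_mod_cast Finset.card_pos.mpr hS
  set t := s / S.card with ht
  have htpos : 0 < t := div_pos hspos hm
  have key : ∀ p ∈ S, f p - t ≤ f p * Real.log (f p) - f p * Real.log t := by
    intro p hp
    have hfp := hf p hp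
    have h0 := Real.log_le_sub_one_of_pos (div_pos htpos hfp)
    rw [Real.log_div (ne_of_gt htpos) (ne_of_gt hfp)] at h0
    have h2 : f p * (Real.log t - Real.log (f p)) ≤ f p * (t / f p - 1) :=
      mul_le_mul_of_nonneg_left h0 hfp.le
    have h3 : f p * (t / f p - 1) = t - f p := by field_simp
    rw [h3] at h2
    nlinarith [h2]
  have hsum := Finset.sum_le_sum key
  rw [Finset.sum_sub_distrib, Finset.sum_sub_distrib, ← Finset.sum_mul] at hsum
  have h1 : ∑ _p ∈ S, t = s := by
    rw [Finset.sum_const, nsmul_eq_mul, ht]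
    field_simp
  have h2 : Real.log t = Real.log s - Real.log S.card := by
    rw [ht, Real.log_div (ne_of_gt hspos) (ne_of_gt hm)]
  rw [h1, h2] at hsum
  nlinarith [hsum]

lemma aux_cycle_softmin {n : ℕ} (E : Finset (Fin n × Fin n)) (w : Fin n × Fin n → ℝ)
    (η : ℝ) (x : Fin n → ℝ) (A : Matrix (Fin n) (Fin n) ℝ) (s : ℝ) (hs : 0 < s)
    (hAval : ∀ p ∈ E, A p.1 p.2 = Real.exp (x p.1 - x p.2 - η * w p))
    (hAle : ∀ p : Fin n × Fin n, A p.1 p.2 ≤ s)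
    (c : List (Fin n)) (hc : IsCycle E c) :
    -η * meanWeight w c ≤ Real.log s := by
  set P := c.zip (c.rotate 1) with hP
  have hlen : P.length = c.length := by simp [hP, List.length_zip]
  have hkpos : 0 < c.length := List.length_pos_iff.mpr hc.1
  -- each summand ≤ log s
  have hmem : ∀ y ∈ P.map (fun p => x p.1 - x p.2 - η * w p), y ≤ Real.log s := by
    intro y hy
    rw [List.mem_map] at hy
    obtain ⟨p, hp, rfl⟩ := hy
    have hpe : p ∈ E := hc.2.2 p hp
    have := hAle p
    rw [hAval p hpe] at this
    calc x p.1 - x p.2 - η * w p = Real.log (Real.exp (x p.1 - x p.2 - η * w p)) :=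
          (Real.log_exp _).symm
      _ ≤ Real.log s := Real.log_le_log (Real.exp_pos _) this
  have hsum := List.sum_le_card_nsmul _ _ hmem
  rw [List.length_map, hlen, nsmul_eq_mul] at hsum
  -- split the sum
  have hsplit : (P.map (fun p => x p.1 - x p.2 - η * w p)).sum
      = (P.map (fun p => x p.1 - x p.2)).sum - η * (P.map w).sum := by
    rw [aux_map_sub_sum P (fun p => x p.1 - x p.2) (fun p => η * w p)]
    congr 1
    induction P with
    | nil => simp
    | cons a l ih => simp [ih]; ring
  have htel : (P.map (fun p => x p.1 - x p.2)).sum = 0 := by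
    rw [hP, aux_zip_map_sub_sum x c (c.rotate 1) (by simp)]
    have : ((c.rotate 1).map x).sum = (c.map x).sum := ((List.rotate_perm c 1).map x).sum_eq
    rw [this]; ring
  rw [hsplit, htel] at hsum
  -- hsum : 0 - η * (P.map w).sum ≤ c.length * log s
  have hmw : meanWeight w c = (P.map w).sum / c.length := rfl
  rw [hmw]
  have hk : (0:ℝ) < (c.length : ℝ) := by exact_mod_cast hkpos
  have heq : -η * ((P.map w).sum / (c.length:ℝ)) = (-η * (P.map w).sum) / c.length := by ring
  rw [heq, div_le_iff₀ hk]
  have hcm : (c.length : ℝ) * Real.log s = Real.log s * c.length := mul_comm _ _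
  linarith [hsum]

lemma aux_cycle_card_one {n : ℕ} (e : Fin n × Fin n) :
    ∀ c, IsCycle {e} c → e.1 = e.2 ∧ c = [e.1] := by
  intro c hc
  obtain ⟨hne, hnd, hmem⟩ := hc
  match c with
  | [] => exact absurd rfl hne
  | [v] =>
    have h1 : (v, v) ∈ [v].zip ([v].rotate 1) := by simp [List.rotate_singleton]
    have h := Finset.mem_singleton.mp (hmem _ h1)
    exact ⟨by rw [← h], by rw [← h]⟩
  | v :: u :: t =>
    exfalso
    have hrot : (v :: u :: t).rotate 1 = u :: (t ++ [v]) := by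
      rw [List.rotate_cons_succ, List.rotate_zero]; simp
    have h1 : (v, u) ∈ (v :: u :: t).zip ((v :: u :: t).rotate 1) := by
      rw [hrot]; simp [List.zip_cons_cons]
    have h2 : ∃ z, (u, z) ∈ (v :: u :: t).zip ((v :: u :: t).rotate 1) := by
      rw [hrot]
      match t with
      | [] => exact ⟨v, by simp [List.zip_cons_cons]⟩
      | a :: t' => exact ⟨a, by simp [List.zip_cons_cons]⟩
    obtain ⟨z, h2⟩ := h2
    have e1 := Finset.mem_singleton.mp (hmem _ h1)
    have e2 := Finset.mem_singleton.mp (hmem _ h2)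
    have hv : v = e.1 := congrArg Prod.fst e1
    have hu : u = e.1 := congrArg Prod.fst e2
    rw [List.nodup_cons] at hnd
    exact hnd.1 (by rw [hv, ← hu]; exact List.mem_cons_self)

lemma aux_card_one {n : ℕ} (E : Finset (Fin n × Fin n)) (w : Fin n × Fin n → ℝ)
    (ε : ℝ) (hε : 0 < ε) (A : Matrix (Fin n) (Fin n) ℝ)
    (hcyc : ∃ c, IsCycle E c) (hcard : E.card = 1)
    (hApos : ∀ p ∈ E, 0 < A p.1 p.2) (hAzero : ∀ i j, (i, j) ∉ E → A i j = 0) :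
    (∑ i, ∑ j, (A i j / ∑ i', ∑ j', A i' j') * w (i, j)) ≤ mmc E w + ε / 2 := by
  obtain ⟨e, he⟩ := Finset.card_eq_one.mp hcard
  subst he
  obtain ⟨a, b⟩ := e
  obtain ⟨c₀, hc₀⟩ := hcyc
  have hab : a = b := (aux_cycle_card_one (a, b) c₀ hc₀).1
  subst hab
  have hmean : meanWeight w [a] = w (a, a) := by
    simp [meanWeight, List.rotate_singleton]
  have hmmc : mmc {(a, a)} w = w (a, a) := by
    rw [mmc]
    have hset : {x : ℝ | ∃ c, IsCycle {(a, a)} c ∧ meanWeight w c = x} = {w (a, a)} := by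
      ext y
      simp only [Set.mem_setOf_eq, Set.mem_singleton_iff]
      constructor
      · rintro ⟨c, hc, rfl⟩
        rw [(aux_cycle_card_one (a, a) c hc).2]
        exact hmean
      · rintro rfl
        exact ⟨[a], ⟨by simp, by simp, by simp [List.rotate_singleton]⟩, hmean⟩
    rw [hset, csInf_singleton]
  have hApos' : 0 < A a a := hApos (a, a) (Finset.mem_singleton_self _)
  have hs : (∑ i', ∑ j', A i' j') = A a a := by
    have h1 : ∑ i' : Fin n, ∑ j' : Fin n, A i' j' = ∑ p : Fin n × Fin n, A p.1 p.2 :=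
      (Fintype.sum_prod_type (fun p : Fin n × Fin n => A p.1 p.2)).symm
    rw [h1]
    exact Fintype.sum_eq_single (a, a) (fun p hp => hAzero p.1 p.2 (by simpa using hp))
  have hlhs : (∑ i, ∑ j, (A i j / ∑ i', ∑ j', A i' j') * w (i, j)) = w (a, a) := by
    rw [hs]
    have h1 : ∑ i : Fin n, ∑ j : Fin n, (A i j / A a a) * w (i, j)
        = ∑ p : Fin n × Fin n, (A p.1 p.2 / A a a) * w p :=
      (Fintype.sum_prod_type (fun p : Fin n × Fin n => (A p.1 p.2 / A a a) * w p)).symm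
    rw [h1]
    have h2 := Fintype.sum_eq_single (f := fun p : Fin n × Fin n => (A p.1 p.2 / A a a) * w p)
      (a, a) (fun p hp => by show (A p.1 p.2 / A a a) * w p = 0; rw [hAzero p.1 p.2 (by simpa using hp)]; simp)
    rw [h2]
    dsimp only
    rw [div_self (ne_of_gt hApos'), one_mul]
  rw [hlhs, hmmc]
  linarith



set_option maxHeartbeats 1600000 in
theorem balancing_gives_near_optimal {n : ℕ} (E : Finset (Fin n × Fin n))
    (w : Fin n × Fin n → ℝ) (wmax ε η δ : ℝ) (d : ℕ) (x : Fin n → ℝ)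
    (K A : Matrix (Fin n) (Fin n) ℝ)
    (hconn : ∀ i j : Fin n, ConnectsWithin E d i j)
    (hcyc : ∃ c, IsCycle E c)
    (hw : ∀ e ∈ E, |w e| ≤ wmax)
    (hε : 0 < ε) (hεw : ε ≤ 2 * wmax)
    (hη : η = 2.5 * Real.log (E.card) / ε)
    (hδ : δ ≤ ε / (16 * wmax * d))
    (hK : ∀ i j, K i j = if (i, j) ∈ E then Real.exp (-η * w (i, j)) else 0)
    (hA : ∀ i j, A i j = Real.exp (x i - x j) * K i j)
    (hbal : imb A ≤ δ * ∑ i, ∑ j, A i j)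
    (hAK : (∑ i, ∑ j, A i j) ≤ ∑ i, ∑ j, K i j) :
    (∑ i, ∑ j, (A i j / ∑ i', ∑ j', A i' j') * w (i, j)) ≤ mmc E w + ε / 2 := by
  classical
  have hAzero : ∀ i j, (i, j) ∉ E → A i j = 0 := by
    intro i j h; rw [hA, hK, if_neg h, mul_zero]
  have hAval : ∀ p ∈ E, A p.1 p.2 = Real.exp (x p.1 - x p.2 - η * w p) := by
    intro p hp
    rw [hA, hK, if_pos (by simpa using hp), ← Real.exp_add]
    congr 1
    ring
  have hAnn : ∀ i j, 0 ≤ A i j := by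
    intro i j
    rw [hA, hK]
    split <;> positivity
  obtain ⟨c₀, hc₀⟩ := hcyc
  have hEne : E.Nonempty := by
    have h1 : 0 < (c₀.zip (c₀.rotate 1)).length := by
      simp only [List.length_zip, List.length_rotate, min_self]
      exact List.length_pos_iff.mpr hc₀.1
    obtain ⟨p, hp⟩ := List.exists_mem_of_ne_nil _ (List.length_pos_iff.mp h1)
    exact ⟨p, hc₀.2.2 p hp⟩
  obtain ⟨e, he⟩ := hEne
  rcases eq_or_lt_of_le (Finset.one_le_card.mpr ⟨e, he⟩) with hm1 | hm2
  · -- degenerate case: a single edge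
    exact aux_card_one E w ε hε A ⟨c₀, hc₀⟩ hm1.symm
      (fun p hp => by rw [hAval p hp]; exact Real.exp_pos _) hAzero
  -- main case: at least two edges
  set s := ∑ i, ∑ j, A i j with hsdef
  have hprod : s = ∑ p : Fin n × Fin n, A p.1 p.2 := by
    rw [hsdef]
    exact (Fintype.sum_prod_type (fun p : Fin n × Fin n => A p.1 p.2)).symm
  clear_value s
  have hAles : ∀ p : Fin n × Fin n, A p.1 p.2 ≤ s := by
    intro p
    rw [hprod]
    exact Finset.single_le_sum (fun q _ => hAnn q.1 q.2) (Finset.mem_univ p)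
  have hs : 0 < s := by
    refine lt_of_lt_of_le ?_ (hAles e)
    rw [hAval e he]
    exact Real.exp_pos _
  have hmR : (2:ℝ) ≤ (E.card : ℝ) := by exact_mod_cast hm2
  have hlogm : 0 < Real.log E.card := Real.log_pos (by linarith)
  have hη0 : 0 < η := by
    rw [hη]
    apply div_pos _ hε
    nlinarith
  have hwm : 0 < wmax := by linarith
  -- bound on sum of K
  have hKE : (∑ i, ∑ j, K i j) = ∑ p ∈ E, K p.1 p.2 := by
    have h1 : ∑ i : Fin n, ∑ j : Fin n, K i j = ∑ p : Fin n × Fin n, K p.1 p.2 :=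
      (Fintype.sum_prod_type (fun p : Fin n × Fin n => K p.1 p.2)).symm
    rw [h1]
    exact (Finset.sum_subset (Finset.subset_univ E)
      (fun p _ hp => by rw [hK, if_neg (by simpa using hp)])).symm
  have hKbound : (∑ p ∈ E, K p.1 p.2) ≤ (E.card : ℝ) * Real.exp (η * wmax) := by
    have := Finset.sum_le_card_nsmul E (fun p => K p.1 p.2) (Real.exp (η * wmax)) ?_
    · rwa [nsmul_eq_mul] at this
    · intro p hp
      show K p.1 p.2 ≤ Real.exp (η * wmax)
      rw [hK, if_pos (by simpa using hp)]
      apply Real.exp_le_exp.mpr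
      have h1 := abs_le.mp (hw p hp)
      nlinarith [h1.1, h1.2]
  set L := Real.log E.card + 2 * η * wmax with hLdef
  clear_value L
  have hL0 : 0 ≤ L := by
    rw [hLdef]
    nlinarith [mul_pos hη0 hwm]
  have hedge : ∀ p ∈ E, x p.1 - x p.2 ≤ L := by
    intro p hp
    have h1 : A p.1 p.2 ≤ Real.exp (Real.log E.card + η * wmax) := by
      rw [Real.exp_add, Real.exp_log (by linarith : (0:ℝ) < (E.card : ℝ))]
      calc A p.1 p.2 ≤ s := hAles p
        _ ≤ ∑ i, ∑ j, K i j := hAK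
        _ = ∑ p ∈ E, K p.1 p.2 := hKE
        _ ≤ (E.card : ℝ) * Real.exp (η * wmax) := hKbound
    rw [hAval p hp] at h1
    have h2 := Real.exp_le_exp.mp h1
    have h3 := abs_le.mp (hw p hp)
    rw [hLdef]
    nlinarith [h3.1, h3.2]
  -- conditioning of x
  obtain ⟨imax, _, hmax⟩ := Finset.exists_max_image (Finset.univ : Finset (Fin n)) x
    ⟨e.1, Finset.mem_univ _⟩
  obtain ⟨imin, _, hmin⟩ := Finset.exists_min_image (Finset.univ : Finset (Fin n)) x
    ⟨e.1, Finset.mem_univ _⟩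
  set R := x imax - x imin with hRdef
  clear_value R
  have hR0 : 0 ≤ R := by
    rw [hRdef]
    exact sub_nonneg.mpr (hmin imax (Finset.mem_univ _))
  have hRdL : R ≤ d * L := by
    rw [hRdef]
    obtain ⟨l, hld, hch, hlast⟩ := hconn imax imin
    have h1 := aux_chain_telescope E x L hL0 hedge l imax hch
    rw [hlast] at h1
    calc x imax - x imin ≤ (l.length : ℝ) * L := h1
      _ ≤ (d : ℝ) * L := mul_le_mul_of_nonneg_right (by exact_mod_cast hld) hL0
  set t := (x imax + x imin) / 2 with htdef
  clear_value t
  have habs : ∀ i, |x i - t| ≤ R / 2 := by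
    intro i
    have h1 := hmax i (Finset.mem_univ i)
    have h2 := hmin i (Finset.mem_univ i)
    rw [abs_le]
    constructor <;> (rw [htdef, hRdef]; linarith)
  -- the T1 identity
  have hT1eq : (∑ i, ∑ j, A i j * (x i - x j))
      = ∑ i, (x i - t) * ((∑ j, A i j) - (∑ j, A j i)) := by
    have hterm : ∀ i : Fin n, ∑ j, A i j * (x i - x j)
        = x i * (∑ j, A i j) - ∑ j, A i j * x j := by
      intro i
      have h0 : ∀ j : Fin n, A i j * (x i - x j) = A i j * x i - A i j * x j :=
        fun j => by ring
      rw [Finset.sum_congr rfl fun j _ => h0 j, Finset.sum_sub_distrib]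
      congr 1
      rw [← Finset.sum_mul, mul_comm]
    have hswap : (∑ i, ∑ j, A i j * x j) = ∑ i, x i * ∑ j, A j i := by
      rw [Finset.sum_comm]
      exact Finset.sum_congr rfl fun j _ => by rw [← Finset.sum_mul, mul_comm]
    have hcomm : (∑ i, ∑ j, A j i) = ∑ i, ∑ j, A i j := Finset.sum_comm
    calc (∑ i, ∑ j, A i j * (x i - x j))
        = ∑ i, (x i * (∑ j, A i j) - ∑ j, A i j * x j) :=
          Finset.sum_congr rfl fun i _ => hterm i
      _ = (∑ i, x i * (∑ j, A i j)) - ∑ i, ∑ j, A i j * x j := Finset.sum_sub_distrib _ _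
      _ = (∑ i, x i * (∑ j, A i j)) - ∑ i, x i * ∑ j, A j i := by rw [hswap]
      _ = ∑ i, (x i - t) * ((∑ j, A i j) - (∑ j, A j i)) := by
          have hexp : ∑ i, (x i - t) * ((∑ j, A i j) - (∑ j, A j i))
              = ∑ i, (x i * (∑ j, A i j) - x i * (∑ j, A j i)
                  - (t * (∑ j, A i j) - t * (∑ j, A j i))) :=
            Finset.sum_congr rfl fun i _ => by ring
          rw [hexp, Finset.sum_sub_distrib, Finset.sum_sub_distrib, Finset.sum_sub_distrib,
            ← Finset.mul_sum, ← Finset.mul_sum, hcomm]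
          ring
  -- T1 bound
  have himb0 : 0 ≤ imb A := Finset.sum_nonneg fun i _ => abs_nonneg _
  have hδs0 : 0 ≤ δ * s := le_trans himb0 hbal
  have hδ0 : 0 ≤ δ := by
    by_contra h
    push_neg at h
    nlinarith
  have hT1le : (∑ i, (x i - t) * ((∑ j, A i j) - (∑ j, A j i))) ≤ (R / 2) * imb A := by
    have h1 : ∀ i ∈ (Finset.univ : Finset (Fin n)),
        (x i - t) * ((∑ j, A i j) - (∑ j, A j i))
          ≤ (R / 2) * |(∑ j, A i j) - (∑ j, A j i)| := by
      intro i _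
      calc (x i - t) * ((∑ j, A i j) - (∑ j, A j i))
          ≤ |x i - t| * |(∑ j, A i j) - (∑ j, A j i)| := by
            rw [← abs_mul]; exact le_abs_self _
        _ ≤ (R / 2) * |(∑ j, A i j) - (∑ j, A j i)| :=
            mul_le_mul_of_nonneg_right (habs i) (abs_nonneg _)
    calc (∑ i, (x i - t) * ((∑ j, A i j) - (∑ j, A j i)))
        ≤ ∑ i, (R / 2) * |(∑ j, A i j) - (∑ j, A j i)| := Finset.sum_le_sum h1
      _ = (R / 2) * imb A := by rw [imb, Finset.mul_sum]
  have hlogm_eq : Real.log E.card = η * ε * 2 / 5 := by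
    have h25 : (2.5:ℝ) = 5 / 2 := by norm_num
    rw [hη, h25]
    field_simp
  have hT1final : (∑ i, ∑ j, A i j * (x i - x j)) ≤ η * ε / 10 * s := by
    have step1 : (∑ i, ∑ j, A i j * (x i - x j)) ≤ (R / 2) * (δ * s) := by
      rw [hT1eq]
      calc (∑ i, (x i - t) * ((∑ j, A i j) - (∑ j, A j i))) ≤ (R / 2) * imb A := hT1le
        _ ≤ (R / 2) * (δ * s) := mul_le_mul_of_nonneg_left hbal (by linarith)
    have step2 : (R / 2) * (δ * s) ≤ ((d : ℝ) * L / 2) * (δ * s) :=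
      mul_le_mul_of_nonneg_right ((div_le_div_iff_of_pos_right (by norm_num : (0:ℝ) < 2)).mpr hRdL) hδs0
    have step3 : ((d : ℝ) * L / 2) * (δ * s) ≤ η * ε / 10 * s := by
      rcases Nat.eq_zero_or_pos d with hd | hd
      · subst hd
        simp only [Nat.cast_zero, zero_mul, zero_div]
        nlinarith [mul_pos (mul_pos hη0 hε) hs]
      · have hd1 : (1:ℝ) ≤ (d : ℝ) := by exact_mod_cast hd
        have hdne : (d:ℝ) ≠ 0 := Nat.cast_ne_zero.mpr (Nat.pos_iff_ne_zero.mp hd)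
        have hwne : wmax ≠ 0 := ne_of_gt hwm
        have hδd : δ * d * (16 * wmax) ≤ ε := by
          have h1 : δ * (d : ℝ) ≤ (ε / (16 * wmax * d)) * d :=
            mul_le_mul_of_nonneg_right hδ (by positivity)
          have h2 : (ε / (16 * wmax * (d:ℝ))) * d = ε / (16 * wmax) := by
            field_simp
          rw [h2] at h1
          calc δ * (d:ℝ) * (16 * wmax) ≤ ε / (16 * wmax) * (16 * wmax) :=
                mul_le_mul_of_nonneg_right h1 (by linarith)
            _ = ε := by field_simp
        have h16 : (0:ℝ) < 16 * wmax := by linarith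
        have key : (d : ℝ) * L / 2 * δ ≤ η * ε / 10 := by
          rw [hLdef, hlogm_eq]
          have hpos : (0:ℝ) ≤ η * (ε / 5 + wmax) := le_of_lt (mul_pos hη0 (by linarith))
          have e3 : (δ * ↑d * (16 * wmax)) * (η * (ε / 5 + wmax))
              ≤ ε * (η * (ε / 5 + wmax)) := mul_le_mul_of_nonneg_right hδd hpos
          have h5 : (ε * η / 5) * ε ≤ (ε * η / 5) * (2 * wmax) :=
            mul_le_mul_of_nonneg_left hεw
              (le_of_lt (div_pos (mul_pos hε hη0) (by norm_num)))
          have key16 : ((d:ℝ) * (η * ε * 2 / 5 + 2 * η * wmax) / 2 * δ) * (16 * wmax)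
              ≤ (η * ε / 10) * (16 * wmax) := by
            nlinarith [e3, h5, mul_pos (mul_pos hη0 hε) hwm]
          exact le_of_mul_le_mul_right key16 h16
        calc ((d : ℝ) * L / 2) * (δ * s) = ((d : ℝ) * L / 2 * δ) * s := by ring
          _ ≤ η * ε / 10 * s := mul_le_mul_of_nonneg_right key hs.le
    linarith
  -- T2 bound (entropy)
  have hsE : s = ∑ p ∈ E, A p.1 p.2 := by
    rw [hprod]
    exact (Finset.sum_subset (Finset.subset_univ E)
      (fun p _ hp => hAzero p.1 p.2 (by simpa using hp))).symm
  have hT2eq : (∑ i, ∑ j, A i j * Real.log (A i j))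
      = ∑ p ∈ E, A p.1 p.2 * Real.log (A p.1 p.2) := by
    have h1 : ∑ i : Fin n, ∑ j : Fin n, A i j * Real.log (A i j)
        = ∑ p : Fin n × Fin n, A p.1 p.2 * Real.log (A p.1 p.2) :=
      (Fintype.sum_prod_type (fun p : Fin n × Fin n => A p.1 p.2 * Real.log (A p.1 p.2))).symm
    rw [h1]
    exact (Finset.sum_subset (Finset.subset_univ E)
      (fun p _ hp => by rw [hAzero p.1 p.2 (by simpa using hp), zero_mul])).symm
  have hT2 : s * Real.log s - s * Real.log E.card ≤ ∑ i, ∑ j, A i j * Real.log (A i j) := by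
    rw [hT2eq, hsE]
    exact aux_entropy_bound E _ ⟨e, he⟩ (fun p hp => by rw [hAval p hp]; exact Real.exp_pos _)
  -- the key identity
  have hkey : η * (∑ i, ∑ j, A i j * w (i, j))
      = (∑ i, ∑ j, A i j * (x i - x j)) - ∑ i, ∑ j, A i j * Real.log (A i j) := by
    have hterm : ∀ i j, η * (A i j * w (i, j))
        = A i j * (x i - x j) - A i j * Real.log (A i j) := by
      intro i j
      by_cases h : (i, j) ∈ E
      · have hv := hAval (i, j) h
        dsimp only at hv
        rw [hv, Real.log_exp]
        ring
      · rw [hAzero i j h]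
        simp
    simp only [Finset.mul_sum]
    rw [← Finset.sum_sub_distrib]
    refine Finset.sum_congr rfl fun i _ => ?_
    rw [← Finset.sum_sub_distrib]
    exact Finset.sum_congr rfl fun j _ => hterm i j
  -- softmin bound
  have hmmc : -Real.log s ≤ η * mmc E w := by
    have h1 : ∀ y ∈ {z : ℝ | ∃ c, IsCycle E c ∧ meanWeight w c = z}, -Real.log s / η ≤ y := by
      rintro y ⟨c, hc, rfl⟩
      have h2 := aux_cycle_softmin E w η x A s hs hAval hAles c hc
      rw [div_le_iff₀ hη0]
      linarith
    have h3 : -Real.log s / η ≤ mmc E w := le_csInf ⟨meanWeight w c₀, c₀, hc₀, rfl⟩ h1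
    have h4 := mul_le_mul_of_nonneg_left h3 hη0.le
    have heq : η * (-Real.log s / η) = -Real.log s := by
      rw [mul_comm]
      exact div_mul_cancel₀ _ (ne_of_gt hη0)
    rwa [heq] at h4
  -- conclusion
  have hgoal : (∑ i, ∑ j, (A i j / s) * w (i, j)) = (∑ i, ∑ j, A i j * w (i, j)) / s := by
    simp only [div_mul_eq_mul_div, Finset.sum_div]
  rw [hgoal, div_le_iff₀ hs]
  have hlogs : s * (-Real.log s) ≤ s * (η * mmc E w) := mul_le_mul_of_nonneg_left hmmc hs.le
  have hfin : η * (∑ i, ∑ j, A i j * w (i, j)) ≤ η * ((mmc E w + ε / 2) * s) := by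
    rw [hkey]
    rw [hlogm_eq] at hT2
    linarith [hT1final, hT2, hlogs]
  exact le_of_mul_le_mul_left hfin hη0
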